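/- Let Q be the m-Kronecker quiver with m ≥ 3, and let d = (d₁,d₂) satisfy d₁² - m·d₁d₂ + d₂² < 0. Then for 0 < x < d₁, the function c_d(x) = (1/2)(mx + d₂ - √((mx-d₂)² + 4x(d₁-x))) satisfies c_d(x) > (d₂/d₁)·x. -/

import Mathlib

/-- For the m-Kronecker quiver with m ≥ 3 and a dimension vector
d = (d₁,d₂) with d₁² - m·d₁d₂ + d₂² < 0, for 0 < x < d₁ the function
c_d(x) = (1/2)(mx + d₂ - √((mx-d₂)² + 4x(d₁-x))) satisfies c_d(x) > (d₂/d₁)·x. -/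
theorem stmt_15 (m : ℕ) (hm : 3 ≤ m) (d₁ d₂ : ℕ)
    (hd : (d₁ : ℝ) ^ 2 - (m : ℝ) * d₁ * d₂ + (d₂ : ℝ) ^ 2 < 0)
    (x : ℝ) (hx0 : 0 < x) (hx1 : x < (d₁ : ℝ)) :
    (1 / 2) * ((m : ℝ) * x + d₂ -
        Real.sqrt (((m : ℝ) * x - d₂) ^ 2 + 4 * x * ((d₁ : ℝ) - x)))
      > ((d₂ : ℝ) / d₁) * x := by
  have hd1 : (0 : ℝ) < d₁ := by
    rcases Nat.eq_zero_or_pos d₁ with h | h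
    · subst h; norm_num at hd; nlinarith [sq_nonneg ((d₂ : ℝ))]
    · exact_mod_cast h
  have hd2 : (0 : ℝ) < d₂ := by
    rcases Nat.eq_zero_or_pos d₂ with h | h
    · subst h; norm_num at hd; nlinarith [sq_nonneg ((d₁ : ℝ))]
    · exact_mod_cast h
  -- positivity of A - 2tx where t = d₂/d₁
  set t : ℝ := (d₂ : ℝ) / d₁ with ht
  have htd : t * d₁ = d₂ := by rw [ht]; field_simp
  have hmd : (d₂ : ℝ) < m * d₁ := by nlinarith
  have hpos : 0 < (m : ℝ) * x + d₂ - 2 * (t * x) := by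
    rcases le_or_gt (2 * t) (m : ℝ) with h | h
    · nlinarith
    · have : ((m : ℝ) - 2 * t) * x > ((m : ℝ) - 2 * t) * d₁ := by
        apply mul_lt_mul_of_neg_left hx1; linarith
      nlinarith
  have key : ((m : ℝ) * x - d₂) ^ 2 + 4 * x * ((d₁ : ℝ) - x)
      < ((m : ℝ) * x + d₂ - 2 * (t * x)) ^ 2 := by
    have hE : 0 < ((d₁ : ℝ) - x) * (-(((d₁ : ℝ) ^ 2 - (m : ℝ) * d₁ * d₂ + (d₂ : ℝ) ^ 2))) :=
      mul_pos (by linarith) (by linarith)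
    have h4 : 0 < 4 * x / d₁ ^ 2 := by positivity
    have expand : ((m : ℝ) * x + d₂ - 2 * (t * x)) ^ 2
        - (((m : ℝ) * x - d₂) ^ 2 + 4 * x * ((d₁ : ℝ) - x))
        = (4 * x / d₁ ^ 2) * (((d₁ : ℝ) - x) * (-(((d₁ : ℝ) ^ 2 - (m : ℝ) * d₁ * d₂ + (d₂ : ℝ) ^ 2)))) := by
      rw [ht]; field_simp
      ring
    nlinarith [mul_pos h4 hE]
  have hs : Real.sqrt (((m : ℝ) * x - d₂) ^ 2 + 4 * x * ((d₁ : ℝ) - x))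
      < (m : ℝ) * x + d₂ - 2 * (t * x) := by
    rw [show (m : ℝ) * x + d₂ - 2 * (t * x) = Real.sqrt (((m : ℝ) * x + d₂ - 2 * (t * x)) ^ 2) from
      (Real.sqrt_sq hpos.le).symm]
    exact Real.sqrt_lt_sqrt (by nlinarith [sq_nonneg ((m:ℝ)*x - d₂)]) key
  rw [gt_iff_lt]
  linarith
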